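/- (Theorem 4.1, confidence interval under distribution shift.) Let P̃ be a target Borel probability measure on ℝ^m with finite first moment, possibly different from the sampling distribution P*. Let ξ₁,…,ξ_N be i.i.d. from P*, P̂_N their empirical measure, τ_ε := (1+ε)·inf_{x∈𝒳} E_{P̂_N}[h(x,ξ)] (a.s. finite), and (x̂_N, k̂_N) a random pair a.s. RS-feasible for τ_ε with respect to P̂_N. Suppose r_N > 0 and β_N ∈ (0,1) satisfy P{ d_W(P*, P̂_N) > r_N } ≤ β_N. Then with probability at least 1 − β_N: −L·r_N − L·d_W(P*, P̃) + τ_ε/(1+ε) ≤ J̃ ≤ E_{P̃}[h(x̂_N,ξ)] ≤ k̂_N·r_N + k̂_N·d_W(P*, P̃) + τ_ε, where J̃ := inf_{x∈𝒳} E_{P̃}[h(x,ξ)]. -/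

import Mathlib

open MeasureTheory

noncomputable section

abbrev Vec (m : ℕ) := EuclideanSpace ℝ (Fin m)

/-- A coupling of two Borel probability measures on `Vec m`. -/
def IsCoupling {m : ℕ} (γ : Measure (Vec m × Vec m)) (P Q : Measure (Vec m)) : Prop :=
  IsProbabilityMeasure γ ∧ γ.map Prod.fst = P ∧ γ.map Prod.snd = Q

/-- Type-1 Wasserstein distance: infimum of `∫ ‖ξ₁ - ξ₂‖₂ dγ` over couplings `γ`. -/
noncomputable def wDist {m : ℕ} (P Q : Measure (Vec m)) : ℝ :=
  sInf {c : ℝ | ∃ γ : Measure (Vec m × Vec m), IsCoupling γ P Q ∧ c = ∫ p, ‖p.1 - p.2‖ ∂γ}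

/-- `(x, k)` is RS-feasible for reference value `τ` with respect to `Phat`. -/
def RSFeasible {m : ℕ} {X : Type*} (h : X → Vec m → ℝ)
    (Phat : Measure (Vec m)) (τ : ℝ) (x : X) (k : ℝ) : Prop :=
  0 ≤ k ∧ ∀ P : Measure (Vec m), IsProbabilityMeasure P →
    Integrable (fun ξ => ‖ξ‖) P → (∫ ξ, h x ξ ∂P) - τ ≤ k * wDist P Phat

/-- Empirical measure `(1/N) ∑ δ_{x i}`. -/
noncomputable def empMeas {m N : ℕ} (xs : Fin N → Vec m) : Measure (Vec m) :=
  (N : ENNReal)⁻¹ • ∑ i : Fin N, Measure.dirac (xs i)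


open ProbabilityTheory

namespace WAux

variable {m : ℕ}

def wSet (P Q : Measure (Vec m)) : Set ℝ :=
  {c : ℝ | ∃ γ : Measure (Vec m × Vec m), IsCoupling γ P Q ∧ c = ∫ p, ‖p.1 - p.2‖ ∂γ}

lemma wDist_eq (P Q : Measure (Vec m)) : wDist P Q = sInf (wSet P Q) := rfl

lemma wSet_nonneg {P Q : Measure (Vec m)} {c : ℝ} (hc : c ∈ wSet P Q) : 0 ≤ c := by
  obtain ⟨γ, -, rfl⟩ := hc
  exact integral_nonneg fun p => norm_nonneg _

lemma wSet_bddBelow (P Q : Measure (Vec m)) : BddBelow (wSet P Q) :=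
  ⟨0, fun c hc => wSet_nonneg hc⟩

lemma wSet_nonempty (P Q : Measure (Vec m)) [IsProbabilityMeasure P] [IsProbabilityMeasure Q] :
    (wSet P Q).Nonempty :=
  ⟨_, P.prod Q, ⟨inferInstance, Measure.fst_prod, Measure.snd_prod⟩, rfl⟩

lemma wDist_nonneg (P Q : Measure (Vec m)) : 0 ≤ wDist P Q :=
  Real.sInf_nonneg fun _ hc => wSet_nonneg hc

/-- Integrability of a function of the first coordinate under a coupling. -/
lemma integrable_fst {γ : Measure (Vec m × Vec m)} {P Q : Measure (Vec m)}
    (hc : IsCoupling γ P Q) {f : Vec m → ℝ} (hf : Continuous f)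
    (hfP : Integrable f P) : Integrable (fun p : Vec m × Vec m => f p.1) γ := by
  have := hc.2.1 ▸ hfP
  exact (integrable_map_measure hf.aestronglyMeasurable measurable_fst.aemeasurable).mp this

lemma integrable_snd {γ : Measure (Vec m × Vec m)} {P Q : Measure (Vec m)}
    (hc : IsCoupling γ P Q) {f : Vec m → ℝ} (hf : Continuous f)
    (hfQ : Integrable f Q) : Integrable (fun p : Vec m × Vec m => f p.2) γ := by
  have := hc.2.2 ▸ hfQ
  exact (integrable_map_measure hf.aestronglyMeasurable measurable_snd.aemeasurable).mp this

lemma integral_fst {γ : Measure (Vec m × Vec m)} {P Q : Measure (Vec m)}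
    (hc : IsCoupling γ P Q) {f : Vec m → ℝ} (hf : Continuous f) :
    ∫ p, f p.1 ∂γ = ∫ ξ, f ξ ∂P := by
  rw [← hc.2.1, integral_map measurable_fst.aemeasurable hf.aestronglyMeasurable]

lemma integral_snd {γ : Measure (Vec m × Vec m)} {P Q : Measure (Vec m)}
    (hc : IsCoupling γ P Q) {f : Vec m → ℝ} (hf : Continuous f) :
    ∫ p, f p.2 ∂γ = ∫ ξ, f ξ ∂Q := by
  rw [← hc.2.2, integral_map measurable_snd.aemeasurable hf.aestronglyMeasurable]

lemma cost_integrable {γ : Measure (Vec m × Vec m)} {P Q : Measure (Vec m)}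
    (hc : IsCoupling γ P Q) (hP : Integrable (fun ξ : Vec m => ‖ξ‖) P)
    (hQ : Integrable (fun ξ : Vec m => ‖ξ‖) Q) :
    Integrable (fun p : Vec m × Vec m => ‖p.1 - p.2‖) γ := by
  have h1 : Integrable (fun p : Vec m × Vec m => ‖p.1‖) γ :=
    integrable_fst hc continuous_norm hP
  have h2 : Integrable (fun p : Vec m × Vec m => ‖p.2‖) γ :=
    integrable_snd hc continuous_norm hQ
  refine (h1.add h2).mono ?_ ?_
  · exact (continuous_norm.comp (continuous_fst.sub continuous_snd)).aestronglyMeasurable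
  · refine Filter.Eventually.of_forall fun p => ?_
    simp only [Real.norm_eq_abs, abs_norm]
    calc ‖p.1 - p.2‖ ≤ ‖p.1‖ + ‖p.2‖ := norm_sub_le _ _
    _ ≤ |‖p.1‖ + ‖p.2‖| := le_abs_self _

end WAux

namespace WAux

variable {m : ℕ}

/-- Lipschitz functions are continuous. -/
lemma lip_continuous {L : ℝ} {f : Vec m → ℝ} (hf : ∀ ξ η, |f ξ - f η| ≤ L * ‖ξ - η‖) :
    Continuous f := by
  have hL : LipschitzWith (Real.toNNReal L) f := by
    intro ξ η
    rw [edist_dist, edist_dist, Real.dist_eq, dist_eq_norm]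
    rw [← ENNReal.ofReal_coe_nnreal, ← ENNReal.ofReal_mul (by positivity)]
    apply ENNReal.ofReal_le_ofReal
    refine le_trans (hf ξ η) (mul_le_mul_of_nonneg_right ?_ (norm_nonneg _))
    exact Real.le_coe_toNNReal L
  exact hL.continuous

/-- Key bound: difference of integrals against a Lipschitz function is controlled by wDist. -/
lemma integral_diff_le {L : ℝ} (hL : 0 ≤ L) {f : Vec m → ℝ}
    (hf : ∀ ξ η, |f ξ - f η| ≤ L * ‖ξ - η‖)
    (P Q : Measure (Vec m)) [IsProbabilityMeasure P] [IsProbabilityMeasure Q]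
    (hPm : Integrable (fun ξ : Vec m => ‖ξ‖) P) (hQm : Integrable (fun ξ : Vec m => ‖ξ‖) Q)
    (hfP : Integrable f P) (hfQ : Integrable f Q) :
    ∫ ξ, f ξ ∂P - ∫ ξ, f ξ ∂Q ≤ L * wDist P Q := by
  have hcont : Continuous f := lip_continuous hf
  have key : ∀ c ∈ wSet P Q, ∫ ξ, f ξ ∂P - ∫ ξ, f ξ ∂Q ≤ L * c := by
    rintro c ⟨γ, hc, rfl⟩
    have h1 : Integrable (fun p : Vec m × Vec m => f p.1) γ := integrable_fst hc hcont hfP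
    have h2 : Integrable (fun p : Vec m × Vec m => f p.2) γ := integrable_snd hc hcont hfQ
    have hci : Integrable (fun p : Vec m × Vec m => ‖p.1 - p.2‖) γ := cost_integrable hc hPm hQm
    rw [← integral_fst hc hcont, ← integral_snd hc hcont, ← integral_sub h1 h2,
      ← integral_const_mul L]
    refine integral_mono (h1.sub h2) (hci.smul L) fun p => ?_
    simpa using le_trans (le_abs_self _) (hf p.1 p.2)
  rcases eq_or_lt_of_le hL with hL0 | hLpos
  · obtain ⟨c, hc⟩ := wSet_nonempty P Q
    have := key c hc
    rw [← hL0] at this ⊢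
    simpa using this
  · rw [mul_comm, ← div_le_iff₀ hLpos]
    refine le_csInf (wSet_nonempty P Q) fun c hc => ?_
    rw [div_le_iff₀ hLpos, mul_comm]
    exact key c hc

lemma isCoupling_swap {γ : Measure (Vec m × Vec m)} {P Q : Measure (Vec m)}
    (hc : IsCoupling γ P Q) : IsCoupling (γ.map Prod.swap) Q P := by
  obtain ⟨hprob, h1, h2⟩ := hc
  haveI := hprob
  refine ⟨Measure.isProbabilityMeasure_map measurable_swap.aemeasurable, ?_, ?_⟩
  · rw [Measure.map_map measurable_fst measurable_swap]; exact h2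
  · rw [Measure.map_map measurable_snd measurable_swap]; exact h1

lemma wSet_symm (P Q : Measure (Vec m)) : wSet P Q ⊆ wSet Q P := by
  rintro c ⟨γ, hc, rfl⟩
  refine ⟨γ.map Prod.swap, isCoupling_swap hc, ?_⟩
  have : ∫ p : Vec m × Vec m, ‖p.1 - p.2‖ ∂(γ.map Prod.swap)
      = ∫ p : Vec m × Vec m, ‖p.2 - p.1‖ ∂γ :=
    integral_map measurable_swap.aemeasurable
      (continuous_norm.comp (continuous_fst.sub continuous_snd)).aestronglyMeasurable
  rw [this]
  exact integral_congr_ae (Filter.Eventually.of_forall fun p => (norm_sub_rev _ _))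

lemma wDist_symm (P Q : Measure (Vec m)) : wDist P Q = wDist Q P := by
  rw [wDist_eq, wDist_eq,
    le_antisymm (wSet_symm P Q) (wSet_symm Q P)]

end WAux

namespace WAux

variable {m : ℕ}

lemma integrable_norm_comp {α : Type*} [MeasurableSpace α] {η : Measure α}
    {φ : α → Vec m} (hφ : Measurable φ) {P : Measure (Vec m)} (hmap : η.map φ = P)
    (hP : Integrable (fun ξ : Vec m => ‖ξ‖) P) : Integrable (fun a => ‖φ a‖) η := by
  have := hmap ▸ hP
  exact (integrable_map_measure continuous_norm.aestronglyMeasurable hφ.aemeasurable).mp this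

/-- Gluing of couplings: given couplings of (P,Q) and (Q,R), there is a coupling of (P,R)
whose cost is at most the sum of costs. -/
lemma glue {P Q R : Measure (Vec m)}
    [IsProbabilityMeasure P] [IsProbabilityMeasure Q] [IsProbabilityMeasure R]
    (hPm : Integrable (fun ξ : Vec m => ‖ξ‖) P) (hQm : Integrable (fun ξ : Vec m => ‖ξ‖) Q)
    (hRm : Integrable (fun ξ : Vec m => ‖ξ‖) R)
    {γ1 γ2 : Measure (Vec m × Vec m)}
    (h1 : IsCoupling γ1 P Q) (h2 : IsCoupling γ2 Q R) :
    ∃ c ∈ wSet P R, c ≤ (∫ p, ‖p.1 - p.2‖ ∂γ1) + ∫ p, ‖p.1 - p.2‖ ∂γ2 := by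
  haveI := h1.1
  haveI := h2.1
  set κ : Kernel (Vec m) (Vec m) := γ2.condKernel with hκ
  have hfst : γ2.fst = Q := by
    rw [Measure.fst]; exact h2.2.1
  have hdis : Q ⊗ₘ κ = γ2 := by
    rw [← hfst]; exact γ2.disintegrate κ
  set κ' : Kernel (Vec m × Vec m) (Vec m) := κ.comap Prod.snd measurable_snd with hκ'
  set η : Measure ((Vec m × Vec m) × Vec m) := γ1 ⊗ₘ κ' with hη
  haveI : IsProbabilityMeasure η := by infer_instance
  -- marginal A : the (second, third) coordinates have law γ2
  have hA : η.map (fun p => (p.1.2, p.2)) = γ2 := by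
    ext s hs
    have hmeasmap : Measurable fun p : (Vec m × Vec m) × Vec m => (p.1.2, p.2) :=
      (measurable_fst.snd).prodMk measurable_snd
    rw [Measure.map_apply hmeasmap hs, Measure.compProd_apply (hmeasmap hs)]
    have step1 : ∀ ab : Vec m × Vec m,
        κ' ab (Prod.mk ab ⁻¹' ((fun p : (Vec m × Vec m) × Vec m => (p.1.2, p.2)) ⁻¹' s))
          = κ ab.2 (Prod.mk ab.2 ⁻¹' s) := by
      intro ab
      rw [Kernel.comap_apply]
      rfl
    rw [lintegral_congr step1]
    have hmeasker : Measurable fun b : Vec m => κ b (Prod.mk b ⁻¹' s) :=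
      Kernel.measurable_kernel_prodMk_left hs
    have : ∫⁻ ab : Vec m × Vec m, κ ab.2 (Prod.mk ab.2 ⁻¹' s) ∂γ1
        = ∫⁻ b, κ b (Prod.mk b ⁻¹' s) ∂(γ1.map Prod.snd) := by
      rw [lintegral_map hmeasker measurable_snd]
    rw [this, h1.2.2, ← Measure.compProd_apply hs, hdis]
  -- marginal of the first coordinate is P
  have hB : η.map (fun p : (Vec m × Vec m) × Vec m => p.1.1) = P := by
    have : (fun p : (Vec m × Vec m) × Vec m => p.1.1)
        = (Prod.fst : Vec m × Vec m → Vec m) ∘ (Prod.fst) := rfl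
    rw [this, ← Measure.map_map measurable_fst measurable_fst]
    have hfstη : η.map Prod.fst = γ1 := by
      rw [← Measure.fst]; exact Measure.fst_compProd γ1 κ'
    rw [hfstη, h1.2.1]
  have hfstη : η.map Prod.fst = γ1 := by
    rw [← Measure.fst]; exact Measure.fst_compProd γ1 κ'
  -- marginal of second coordinate is Q, of third coordinate is R
  have hQ' : η.map (fun p : (Vec m × Vec m) × Vec m => p.1.2) = Q := by
    have : (fun p : (Vec m × Vec m) × Vec m => p.1.2)
        = (Prod.fst : Vec m × Vec m → Vec m) ∘ (fun p => (p.1.2, p.2)) := rfl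
    rw [this, ← Measure.map_map measurable_fst ((measurable_fst.snd).prodMk measurable_snd),
      hA, h2.2.1]
  have hC : η.map (fun p : (Vec m × Vec m) × Vec m => p.2) = R := by
    have : (fun p : (Vec m × Vec m) × Vec m => p.2)
        = (Prod.snd : Vec m × Vec m → Vec m) ∘ (fun p => (p.1.2, p.2)) := rfl
    rw [this, ← Measure.map_map measurable_snd ((measurable_fst.snd).prodMk measurable_snd),
      hA, h2.2.2]
  -- the glued coupling
  set φ : (Vec m × Vec m) × Vec m → Vec m × Vec m := fun p => (p.1.1, p.2) with hφ
  have hφmeas : Measurable φ := (measurable_fst.fst).prodMk measurable_snd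
  refine ⟨∫ p, ‖p.1 - p.2‖ ∂(η.map φ), ⟨η.map φ, ⟨Measure.isProbabilityMeasure_map hφmeas.aemeasurable,
    ?_, ?_⟩, rfl⟩, ?_⟩
  · rw [Measure.map_map measurable_fst hφmeas]; exact hB
  · rw [Measure.map_map measurable_snd hφmeas]; exact hC
  -- cost bound
  have hcost : ∫ p : Vec m × Vec m, ‖p.1 - p.2‖ ∂(η.map φ) = ∫ q, ‖(φ q).1 - (φ q).2‖ ∂η :=
    integral_map hφmeas.aemeasurable
      (continuous_norm.comp (continuous_fst.sub continuous_snd)).aestronglyMeasurable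
  rw [hcost]
  -- integrability of coordinate norms
  have i1 : Integrable (fun q : (Vec m × Vec m) × Vec m => ‖q.1.1‖) η :=
    integrable_norm_comp (measurable_fst.fst) hB hPm
  have i2 : Integrable (fun q : (Vec m × Vec m) × Vec m => ‖q.1.2‖) η :=
    integrable_norm_comp (measurable_fst.snd) hQ' hQm
  have i3 : Integrable (fun q : (Vec m × Vec m) × Vec m => ‖q.2‖) η :=
    integrable_norm_comp measurable_snd hC hRm
  have imono : ∀ (f g : (Vec m × Vec m) × Vec m → Vec m), Continuous f → Continuous g →
      Integrable (fun q => ‖f q‖) η → Integrable (fun q => ‖g q‖) η →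
      Integrable (fun q => ‖f q - g q‖) η := by
    intro f g hf hg hif hig
    refine (hif.add hig).mono ((continuous_norm.comp (hf.sub hg)).aestronglyMeasurable)
      (Filter.Eventually.of_forall fun q => ?_)
    simp only [Real.norm_eq_abs, abs_norm]
    calc ‖f q - g q‖ ≤ ‖f q‖ + ‖g q‖ := norm_sub_le _ _
    _ ≤ |‖f q‖ + ‖g q‖| := le_abs_self _
  have j13 : Integrable (fun q : (Vec m × Vec m) × Vec m => ‖q.1.1 - q.2‖) η :=
    imono _ _ continuous_fst.fst continuous_snd i1 i3
  have j12 : Integrable (fun q : (Vec m × Vec m) × Vec m => ‖q.1.1 - q.1.2‖) η :=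
    imono _ _ continuous_fst.fst continuous_fst.snd i1 i2
  have j23 : Integrable (fun q : (Vec m × Vec m) × Vec m => ‖q.1.2 - q.2‖) η :=
    imono _ _ continuous_fst.snd continuous_snd i2 i3
  have tri : ∫ q, ‖q.1.1 - q.2‖ ∂η
      ≤ ∫ q, (‖q.1.1 - q.1.2‖ + ‖q.1.2 - q.2‖) ∂η := by
    refine integral_mono j13 (j12.add j23) fun q => ?_
    calc ‖q.1.1 - q.2‖ = ‖(q.1.1 - q.1.2) + (q.1.2 - q.2)‖ := by abel_nf
    _ ≤ ‖q.1.1 - q.1.2‖ + ‖q.1.2 - q.2‖ := norm_add_le _ _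
  have e1 : ∫ q, ‖q.1.1 - q.1.2‖ ∂η = ∫ p, ‖p.1 - p.2‖ ∂γ1 := by
    have : ∫ p : Vec m × Vec m, ‖p.1 - p.2‖ ∂(η.map Prod.fst) = ∫ q, ‖q.1.1 - q.1.2‖ ∂η :=
      integral_map measurable_fst.aemeasurable
        (continuous_norm.comp (continuous_fst.sub continuous_snd)).aestronglyMeasurable
    rw [← this, hfstη]
  have e2 : ∫ q, ‖q.1.2 - q.2‖ ∂η = ∫ p, ‖p.1 - p.2‖ ∂γ2 := by
    have : ∫ p : Vec m × Vec m, ‖p.1 - p.2‖ ∂(η.map (fun p => (p.1.2, p.2)))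
        = ∫ q, ‖q.1.2 - q.2‖ ∂η :=
      integral_map ((measurable_fst.snd).prodMk measurable_snd).aemeasurable
        (continuous_norm.comp (continuous_fst.sub continuous_snd)).aestronglyMeasurable
    rw [← this, hA]
  rw [integral_add j12 j23, e1, e2] at tri
  exact tri

/-- Triangle inequality for the Wasserstein distance. -/
lemma wDist_triangle (P Q R : Measure (Vec m))
    [IsProbabilityMeasure P] [IsProbabilityMeasure Q] [IsProbabilityMeasure R]
    (hPm : Integrable (fun ξ : Vec m => ‖ξ‖) P) (hQm : Integrable (fun ξ : Vec m => ‖ξ‖) Q)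
    (hRm : Integrable (fun ξ : Vec m => ‖ξ‖) R) :
    wDist P R ≤ wDist P Q + wDist Q R := by
  have key : ∀ c1 ∈ wSet P Q, ∀ c2 ∈ wSet Q R, wDist P R ≤ c1 + c2 := by
    rintro c1 ⟨γ1, h1, rfl⟩ c2 ⟨γ2, h2, rfl⟩
    obtain ⟨c, hc, hle⟩ := glue hPm hQm hRm h1 h2
    exact le_trans (csInf_le (wSet_bddBelow P R) hc) hle
  have step1 : ∀ c2 ∈ wSet Q R, wDist P R - c2 ≤ wDist P Q := fun c2 hc2 =>
    le_csInf (wSet_nonempty P Q) fun c1 hc1 => by linarith [key c1 hc1 c2 hc2]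
  have step2 : wDist P R - wDist P Q ≤ wDist Q R :=
    le_csInf (wSet_nonempty Q R) fun c2 hc2 => by linarith [step1 c2 hc2]
  linarith

end WAux


namespace WAux

variable {m : ℕ}

lemma empMeas_prob {N : ℕ} (hN : 0 < N) (xs : Fin N → Vec m) :
    IsProbabilityMeasure (empMeas xs) := by
  constructor
  simp only [empMeas, Measure.smul_apply, Measure.coe_finset_sum, Finset.sum_apply,
    Measure.dirac_apply_of_mem (Set.mem_univ _), Finset.sum_const, Finset.card_univ,
    Fintype.card_fin, nsmul_eq_mul, mul_one, smul_eq_mul]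
  rw [ENNReal.inv_mul_cancel (by exact_mod_cast hN.ne') (ENNReal.natCast_ne_top N)]

lemma empMeas_integrable {N : ℕ} (hN : 0 < N) (xs : Fin N → Vec m) {f : Vec m → ℝ}
    (hf : Continuous f) : Integrable f (empMeas xs) := by
  unfold empMeas
  refine Integrable.smul_measure ?_ (by simp [hN.ne'])
  refine integrable_finset_sum_measure.mpr fun i _ => ?_
  refine ⟨hf.aestronglyMeasurable, ?_⟩
  rw [HasFiniteIntegral, lintegral_dirac]
  exact ENNReal.coe_lt_top

end WAux


/-- Theorem 4.1, confidence interval under distribution shift: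
with probability at least 1 - beta_N,
-L r_N - L d_W(P*,Ptilde) + tau_eps/(1+eps) <= Jtilde <= E_{Ptilde}[h(xhat_N,.)]
  <= khat_N r_N + khat_N d_W(P*,Ptilde) + tau_eps. -/
theorem confidence_interval_distribution_shift {m N : ℕ} (hN : 0 < N)
    {X : Type*} [Nonempty X]
    {Ω : Type*} [MeasurableSpace Ω] (μ : Measure Ω) [IsProbabilityMeasure μ]
    (h : X → Vec m → ℝ) (L : ℝ) (hL : 0 ≤ L)
    (hLip : ∀ x ξ η, |h x ξ - h x η| ≤ L * ‖ξ - η‖)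
    (hInt : ∀ x (P : Measure (Vec m)), IsProbabilityMeasure P →
      Integrable (fun ξ => ‖ξ‖) P → Integrable (h x) P)
    -- sampling distribution and target distribution
    (Pstar Ptilde : Measure (Vec m))
    [IsProbabilityMeasure Pstar] [IsProbabilityMeasure Ptilde]
    (hPstarmom : Integrable (fun ξ => ‖ξ‖) Pstar)
    (hPtildemom : Integrable (fun ξ => ‖ξ‖) Ptilde)
    -- i.i.d. samples from Pstar
    (ξs : Fin N → Ω → Vec m) (hmeas : ∀ i, Measurable (ξs i))
    (hindep : ProbabilityTheory.iIndepFun ξs μ)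
    (hdist : ∀ i, μ.map (ξs i) = Pstar)
    -- empirical measure
    (Phat : Ω → Measure (Vec m)) (hPhat : ∀ ω, Phat ω = empMeas (fun i => ξs i ω))
    -- reference value
    (ε : ℝ) (hε : 0 < ε)
    (τ : Ω → ℝ) (hτ : ∀ ω, τ ω = (1 + ε) * ⨅ x, ∫ ξ, h x ξ ∂(Phat ω))
    (hfin : ∀ᵐ ω ∂μ, BddBelow (Set.range fun x => ∫ ξ, h x ξ ∂(Phat ω)))
    -- almost surely RS-feasible random pair
    (xhat : Ω → X) (khat : Ω → ℝ)
    (hfeas : ∀ᵐ ω ∂μ, RSFeasible h (Phat ω) (τ ω) (xhat ω) (khat ω))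
    -- concentration of the empirical measure
    (r β : ℝ) (hr : 0 < r) (hβ0 : 0 < β) (hβ1 : β < 1)
    (htail : μ {ω | r < wDist Pstar (Phat ω)} ≤ ENNReal.ofReal β) :
    ENNReal.ofReal (1 - β) ≤
      μ {ω | -L * r - L * wDist Pstar Ptilde + τ ω / (1 + ε) ≤
               (⨅ x, ∫ ξ, h x ξ ∂Ptilde) ∧
             (⨅ x, ∫ ξ, h x ξ ∂Ptilde) ≤ (∫ ξ, h (xhat ω) ξ ∂Ptilde) ∧
             (∫ ξ, h (xhat ω) ξ ∂Ptilde) ≤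
               khat ω * r + khat ω * wDist Pstar Ptilde + τ ω} := by
  classical
  set W := wDist Pstar Ptilde with hW
  have hεne : (1 : ℝ) + ε ≠ 0 := by positivity
  have main : ∀ ω, wDist Pstar (Phat ω) ≤ r →
      BddBelow (Set.range fun x => ∫ ξ, h x ξ ∂(Phat ω)) →
      RSFeasible h (Phat ω) (τ ω) (xhat ω) (khat ω) →
      (-L * r - L * W + τ ω / (1 + ε) ≤ (⨅ x, ∫ ξ, h x ξ ∂Ptilde) ∧
       (⨅ x, ∫ ξ, h x ξ ∂Ptilde) ≤ (∫ ξ, h (xhat ω) ξ ∂Ptilde) ∧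
       (∫ ξ, h (xhat ω) ξ ∂Ptilde) ≤ khat ω * r + khat ω * W + τ ω) := by
    intro ω hw hbdd hfe
    obtain ⟨hk0, hfeasP⟩ := hfe
    haveI hPh : IsProbabilityMeasure (Phat ω) := by
      rw [hPhat]; exact WAux.empMeas_prob hN _
    have hPhm : Integrable (fun ξ : Vec m => ‖ξ‖) (Phat ω) := by
      rw [hPhat]; exact WAux.empMeas_integrable hN _ continuous_norm
    have hIntPh : ∀ x, Integrable (h x) (Phat ω) := fun x => hInt x _ hPh hPhm
    have hIntPs : ∀ x, Integrable (h x) Pstar := fun x => hInt x _ inferInstance hPstarmom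
    have hIntPt : ∀ x, Integrable (h x) Ptilde := fun x => hInt x _ inferInstance hPtildemom
    have hτeq : τ ω / (1 + ε) = ⨅ x, ∫ ξ, h x ξ ∂(Phat ω) := by
      rw [hτ, mul_comm, mul_div_assoc, div_self hεne, mul_one]
    have hbddt : BddBelow (Set.range fun x => ∫ ξ, h x ξ ∂Ptilde) := by
      obtain ⟨B, hB⟩ := hbdd
      refine ⟨B - L * wDist (Phat ω) Ptilde, ?_⟩
      rintro y ⟨x, rfl⟩
      have hd := WAux.integral_diff_le hL (hLip x) (Phat ω) Ptilde hPhm hPtildemom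
        (hIntPh x) (hIntPt x)
      have hBx : B ≤ ∫ ξ, h x ξ ∂(Phat ω) := hB ⟨x, rfl⟩
      simp only
      linarith
    refine ⟨?_, ?_, ?_⟩
    · rw [hτeq]
      refine le_ciInf fun x => ?_
      have h1 : (⨅ x, ∫ ξ, h x ξ ∂(Phat ω)) ≤ ∫ ξ, h x ξ ∂(Phat ω) := ciInf_le hbdd x
      have h2 := WAux.integral_diff_le hL (hLip x) (Phat ω) Pstar hPhm hPstarmom
        (hIntPh x) (hIntPs x)
      have h3 := WAux.integral_diff_le hL (hLip x) Pstar Ptilde hPstarmom hPtildemom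
        (hIntPs x) (hIntPt x)
      have h4 : L * wDist (Phat ω) Pstar ≤ L * r := by
        rw [WAux.wDist_symm]; exact mul_le_mul_of_nonneg_left hw hL
      rw [← hW] at h3
      linarith
    · exact ciInf_le hbddt (xhat ω)
    · have hfe2 := hfeasP Ptilde inferInstance hPtildemom
      have htri : wDist Ptilde (Phat ω) ≤ wDist Ptilde Pstar + wDist Pstar (Phat ω) :=
        WAux.wDist_triangle Ptilde Pstar (Phat ω) hPtildemom hPstarmom hPhm
      have hsym : wDist Ptilde Pstar = W := WAux.wDist_symm _ _
      have hk : khat ω * wDist Ptilde (Phat ω) ≤ khat ω * (W + r) := by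
        refine mul_le_mul_of_nonneg_left ?_ hk0
        rw [← hsym]; linarith
      nlinarith [hfe2, hk]
  -- measure-theoretic bookkeeping
  set G := {ω | wDist Pstar (Phat ω) ≤ r} with hG
  set S := {ω | BddBelow (Set.range fun x => ∫ ξ, h x ξ ∂(Phat ω)) ∧
      RSFeasible h (Phat ω) (τ ω) (xhat ω) (khat ω)} with hS
  have hSc : μ Sᶜ = 0 := by
    have := hfin.and hfeas
    rw [Filter.eventually_iff, mem_ae_iff] at this
    exact this
  have hGc : μ Gᶜ ≤ ENNReal.ofReal β := by
    have : Gᶜ = {ω | r < wDist Pstar (Phat ω)} := by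
      ext ω; simp [hG, not_le]
    rw [this]; exact htail
  have h1 : (1 : ENNReal) - ENNReal.ofReal β ≤ μ G := by
    rw [tsub_le_iff_right]
    calc (1 : ENNReal) = μ Set.univ := (measure_univ (μ := μ)).symm
    _ = μ (G ∪ Gᶜ) := by rw [Set.union_compl_self]
    _ ≤ μ G + μ Gᶜ := measure_union_le _ _
    _ ≤ μ G + ENNReal.ofReal β := add_le_add le_rfl hGc
  have h2 : μ G ≤ μ (G ∩ S) := by
    calc μ G ≤ μ ((G ∩ S) ∪ Sᶜ) := measure_mono (fun ω hω => by
      by_cases hs : ω ∈ S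
      · exact Or.inl ⟨hω, hs⟩
      · exact Or.inr hs)
    _ ≤ μ (G ∩ S) + μ Sᶜ := measure_union_le _ _
    _ = μ (G ∩ S) := by rw [hSc, add_zero]
  have h3 : μ (G ∩ S) ≤ μ {ω | -L * r - L * W + τ ω / (1 + ε) ≤
               (⨅ x, ∫ ξ, h x ξ ∂Ptilde) ∧
             (⨅ x, ∫ ξ, h x ξ ∂Ptilde) ≤ (∫ ξ, h (xhat ω) ξ ∂Ptilde) ∧
             (∫ ξ, h (xhat ω) ξ ∂Ptilde) ≤ khat ω * r + khat ω * W + τ ω} := by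
    refine measure_mono fun ω hω => ?_
    exact main ω hω.1 hω.2.1 hω.2.2
  have h0 : ENNReal.ofReal (1 - β) ≤ (1 : ENNReal) - ENNReal.ofReal β := by
    rw [ENNReal.ofReal_sub _ hβ0.le, ENNReal.ofReal_one]
  exact le_trans h0 (le_trans h1 (le_trans h2 h3))
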